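/- Let V be an 8-dimensional vector space over the field 𝔽₂ = ℤ/2ℤ (for instance V = (ℤ/2ℤ)^8), and let σ and τ be 𝔽₂-linear automorphisms of V satisfying σ³ = id, σ(v) ≠ v for every v ≠ 0, and τ ∘ σ = σ² ∘ τ. Then every 𝔽₂-linear subspace W of V which is fixed pointwise by τ has dimension at most 6 over 𝔽₂. -/
import Mathlib


/-- Linear-algebraic core of Proposition 4.2: on an 8-dimensional `𝔽₂`-vector
space, if `σ` is a linear automorphism with `σ³ = id` and no nonzero fixed
vector, and `τ` is a linear automorphism with `τ ∘ σ = σ² ∘ τ`, then any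
subspace fixed pointwise by `τ` has dimension at most 6. -/
theorem tau_fixed_subspace_dim_le_six {V : Type*} [AddCommGroup V]
    [Module (ZMod 2) V] (hdim : Module.finrank (ZMod 2) V = 8)
    (σ τ : V ≃ₗ[ZMod 2] V) (hσ : ∀ v, σ (σ (σ v)) = v)
    (hfix : ∀ v : V, v ≠ 0 → σ v ≠ v)
    (hcomm : ∀ v, τ (σ v) = σ (σ (τ v)))
    (W : Submodule (ZMod 2) V) (hW : ∀ w ∈ W, τ w = w) :
    Module.finrank (ZMod 2) W ≤ 6 := by
  have hfd : FiniteDimensional (ZMod 2) V := by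
    apply FiniteDimensional.of_finrank_pos; omega
  set W' : Submodule (ZMod 2) V := W.map (σ : V →ₗ[ZMod 2] V) with hW'
  -- W ⊓ σ(W) = ⊥
  have hdisj : W ⊓ W' = ⊥ := by
    rw [eq_bot_iff]
    rintro x ⟨hxW, w, hwW, rfl⟩
    have h1 : τ (σ w) = σ w := hW _ hxW
    have h2 : τ (σ w) = σ (σ (τ w)) := hcomm w
    have h3 : τ w = w := hW w hwW
    rw [h3] at h2
    have h4 : σ (σ w) = σ w := by rw [← h2, h1]
    have h5 : σ w = w := by
      have := congrArg σ h4
      rw [hσ w] at this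
      rw [h4] at this
      exact this.symm
    have : w = 0 := by
      by_contra hne
      exact hfix w hne h5
    simp [this]
  have hrank : Module.finrank (ZMod 2) W' = Module.finrank (ZMod 2) W :=
    LinearEquiv.finrank_map_eq σ W
  have hsum := Submodule.finrank_sup_add_finrank_inf_eq W W'
  rw [hdisj] at hsum
  simp only [finrank_bot, add_zero] at hsum
  have hle : Module.finrank (ZMod 2) ↥(W ⊔ W') ≤ 8 := hdim ▸ Submodule.finrank_le _
  omega
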